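/- Let (X,d) be a metric space, H ⊆ X a finite nonempty set, l an integer, and suppose the radius r = max_{p ∈ H} d(p, π_1) of H around a root point π_1 ∈ H satisfies r ≤ 2^l. Let π_1, π_2, …, π_m ∈ H be obtained by farthest-point greedy selection (π_{k+1} maximizes the minimum distance to {π_1,…,π_k} over H) stopped at the least m with max_{p ∈ H} min_{1 ≤ i ≤ m} d(p, π_i) ≤ 2^{l-1}. Then the children π_1,…,π_m of the tree vertex π_1 at level l satisfy the cover tree covering property, {π_1,…,π_m} ⊆ B(π_1, 2^l), and the cover tree separating property, d(π_i, π_j) ≥ 2^{l-1} for all i ≠ j. -/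
import Mathlib


/-- The vertex-splitting step maintains the cover tree invariants: if the set
`H` has radius `r ≤ 2^l` around its root `π 0`, and the children
`π 0, …, π (m-1)` are selected greedily until the farthest remaining point is
within `2^(l-1)` of a selected child (at the least such `m`), then all
children lie in `B(π 0, 2^l)` (covering property) and distinct children are
at distance at least `2^(l-1)` from each other (separating property). -/
theorem vertex_split_invariants {X : Type*} [MetricSpace X]
    (H : Set X) (hHfin : H.Finite) (hHne : H.Nonempty)
    (l : ℤ)
    (π : ℕ → X) (hπH : ∀ k, π k ∈ H)
    (hradius : ∀ p ∈ H, dist p (π 0) ≤ (2 : ℝ) ^ l)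
    (hgreedy : ∀ k, ∀ p ∈ H,
      (⨅ i : Fin (k + 1), dist p (π i)) ≤
        ⨅ i : Fin (k + 1), dist (π (k + 1)) (π i))
    (m : ℕ) (hm : 1 ≤ m)
    (hstop : ∀ p ∈ H, (⨅ i : Fin m, dist p (π i)) ≤ (2 : ℝ) ^ (l - 1))
    (hleast : ∀ m', 1 ≤ m' → m' < m →
      ∃ p ∈ H, (2 : ℝ) ^ (l - 1) < ⨅ i : Fin m', dist p (π i)) :
    (∀ i < m, dist (π 0) (π i) ≤ (2 : ℝ) ^ l) ∧
    (∀ i j, i < m → j < m → i ≠ j → (2 : ℝ) ^ (l - 1) ≤ dist (π i) (π j)) := by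
  constructor
  · intro i hi
    rw [dist_comm]
    exact hradius (π i) (hπH i)
  · have key : ∀ i j, j < m → i < j → (2:ℝ)^(l-1) ≤ dist (π i) (π j) := by
      intro i j hjm hij
      obtain ⟨k, rfl⟩ : ∃ k, j = k + 1 := ⟨j - 1, by omega⟩
      obtain ⟨p, hpH, hp⟩ := hleast (k+1) (by omega) hjm
      have h1 := hgreedy k p hpH
      have h2 : (⨅ i : Fin (k+1), dist (π (k+1)) (π i)) ≤ dist (π (k+1)) (π i) := by
        have hb : BddBelow (Set.range fun i : Fin (k+1) => dist (π (k+1)) (π i)) :=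
          ⟨0, by rintro x ⟨t, rfl⟩; exact dist_nonneg⟩
        exact ciInf_le hb ⟨i, by omega⟩
      rw [dist_comm]
      linarith
    intro i j hi hj hij
    rcases lt_or_gt_of_ne hij with h | h
    · exact key i j hj h
    · rw [dist_comm]; exact key j i hi h
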